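/- Let S be a commutative unital semiring with a zero and an element α of infinite multiplicative order, and let h_{ij} : ℕ* → 2×2 matrices over S be the homomorphism sending i ↦ I = [[1,1],[0,0]], j ↦ J = [[0,0],[0,1]], each k with i < k < j to the zero matrix K, and all other letters to the identity E. Then for any word w: h_{ij}(w) = E iff w contains no symbol in [i,j]; h_{ij}(w) = I iff w contains i and no other symbol from [i,j]; h_{ij}(w) = J iff w contains j and no other symbol from [i,j]; h_{ij}(w) = L = I·J iff w contains both i and j, no other symbol from [i,j], and no scattered subword ji; and h_{ij}(w) = K otherwise. -/

import Mathlib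

namespace Stmt15Aux

def mul5 (x y : ℕ) : ℕ :=
  if x = 0 then y
  else if y = 0 then x
  else if x = 4 ∨ y = 4 then 4
  else if x = 1 then (if y = 1 then 1 else 3)
  else if x = 2 then (if y = 2 then 2 else 4)
  else (if y = 2 then 3 else 4)

def lc (i j a : ℕ) : ℕ :=
  if a = i then 1 else if a = j then 2 else if i < a ∧ a < j then 4 else 0

def code (i j : ℕ) (w : List ℕ) : ℕ := (w.map (lc i j)).foldr mul5 0

lemma code_nil (i j : ℕ) : code i j [] = 0 := rfl

lemma code_cons (i j a : ℕ) (w : List ℕ) :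
    code i j (a :: w) = mul5 (lc i j a) (code i j w) := rfl

lemma mul5_le {x y : ℕ} (hx : x ≤ 4) (hy : y ≤ 4) : mul5 x y ≤ 4 := by
  unfold mul5; split_ifs <;> omega

lemma mul5_zero (y : ℕ) : mul5 0 y = y := by simp [mul5]

lemma mul5_four (y : ℕ) : mul5 4 y = 4 := by
  simp [mul5]

lemma lc_le (i j a : ℕ) : lc i j a ≤ 4 := by
  unfold lc; split_ifs <;> omega

lemma code_le (i j : ℕ) (w : List ℕ) : code i j w ≤ 4 := by
  induction w with
  | nil => simp [code_nil]
  | cons a w ih => rw [code_cons]; exact mul5_le (lc_le i j a) ih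

def Bad (i j : ℕ) (w : List ℕ) : Prop :=
  ∃ w₁ w₂ w₃ : List ℕ, w = w₁ ++ j :: w₂ ++ i :: w₃

lemma bad_cons {i j a : ℕ} {w : List ℕ} :
    Bad i j (a :: w) ↔ (a = j ∧ i ∈ w) ∨ Bad i j w := by
  constructor
  · rintro ⟨w₁, w₂, w₃, hw⟩
    cases w₁ with
    | nil =>
      rw [List.nil_append] at hw
      injection hw with h1 h2
      exact Or.inl ⟨h1, by simp [h2]⟩
    | cons b w₁ =>
      rw [List.cons_append] at hw
      injection hw with h1 h2
      exact Or.inr ⟨w₁, w₂, w₃, h2⟩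
  · rintro (⟨rfl, hi⟩ | ⟨w₁, w₂, w₃, rfl⟩)
    · obtain ⟨s, t, rfl⟩ := List.append_of_mem hi
      exact ⟨[], s, t, by simp⟩
    · exact ⟨a :: w₁, w₂, w₃, rfl⟩

lemma bad_i_mem {i j : ℕ} {w : List ℕ} (h : Bad i j w) : i ∈ w := by
  obtain ⟨w₁, w₂, w₃, rfl⟩ := h; simp

def C0 (i j : ℕ) (w : List ℕ) : Prop := ∀ a ∈ w, ¬(i ≤ a ∧ a ≤ j)
def C1 (i j : ℕ) (w : List ℕ) : Prop := i ∈ w ∧ ∀ a ∈ w, i ≤ a → a ≤ j → a = i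
def C2 (i j : ℕ) (w : List ℕ) : Prop := j ∈ w ∧ ∀ a ∈ w, i ≤ a → a ≤ j → a = j
def C3 (i j : ℕ) (w : List ℕ) : Prop :=
  i ∈ w ∧ j ∈ w ∧ (∀ a ∈ w, i ≤ a → a ≤ j → a = i ∨ a = j) ∧ ¬ Bad i j w

set_option maxHeartbeats 800000 in
lemma main (i j : ℕ) (hij : i < j) (w : List ℕ) :
    (code i j w = 0 ∧ C0 i j w) ∨ (code i j w = 1 ∧ C1 i j w) ∨
    (code i j w = 2 ∧ C2 i j w) ∨ (code i j w = 3 ∧ C3 i j w) ∨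
    (code i j w = 4 ∧ ¬C0 i j w ∧ ¬C1 i j w ∧ ¬C2 i j w ∧ ¬C3 i j w) := by
  have hne : i ≠ j := hij.ne
  induction w with
  | nil => exact Or.inl ⟨rfl, by simp [C0]⟩
  | cons a w IH =>
    by_cases hai : a = i
    · have hmem : i ∈ a :: w := List.mem_cons.mpr (Or.inl hai.symm)
      have hcc : code i j (a :: w) = mul5 1 (code i j w) := by
        rw [code_cons]; simp [lc, hai]
      rcases IH with ⟨hc, hP⟩ | ⟨hc, hP⟩ | ⟨hc, hP⟩ | ⟨hc, hP⟩ | ⟨hc, hP⟩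
      · -- code w = 0 : result I
        refine Or.inr (Or.inl ⟨by rw [hcc, hc]; rfl, hmem, ?_⟩)
        intro b hb h1 h2
        rcases List.mem_cons.mp hb with rfl | hb
        · exact hai
        · exact absurd ⟨h1, h2⟩ (hP b hb)
      · -- code w = 1 : result I
        refine Or.inr (Or.inl ⟨by rw [hcc, hc]; rfl, hmem, ?_⟩)
        intro b hb h1 h2
        rcases List.mem_cons.mp hb with rfl | hb
        · exact hai
        · exact hP.2 b hb h1 h2
      · -- code w = 2 : result L
        obtain ⟨hjw, hall⟩ := hP
        refine Or.inr (Or.inr (Or.inr (Or.inl ⟨by rw [hcc, hc]; rfl,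
          hmem, List.mem_cons_of_mem _ hjw, ?_, ?_⟩)))
        · intro b hb h1 h2
          rcases List.mem_cons.mp hb with rfl | hb
          · exact Or.inl hai
          · exact Or.inr (hall b hb h1 h2)
        · rw [bad_cons]
          rintro (⟨h1, -⟩ | hbad)
          · exact hne (hai.symm.trans h1)
          · exact hne (hall i (bad_i_mem hbad) le_rfl hij.le)
      · -- code w = 3 : result L
        obtain ⟨hiw, hjw, hall, hnb⟩ := hP
        refine Or.inr (Or.inr (Or.inr (Or.inl ⟨by rw [hcc, hc]; rfl,
          hmem, List.mem_cons_of_mem _ hjw, ?_, ?_⟩)))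
        · intro b hb h1 h2
          rcases List.mem_cons.mp hb with rfl | hb
          · exact Or.inl hai
          · exact hall b hb h1 h2
        · rw [bad_cons]
          rintro (⟨h1, -⟩ | hbad)
          · exact hne (hai.symm.trans h1)
          · exact hnb hbad
      · -- code w = 4 : result K
        obtain ⟨n0, n1, n2, n3⟩ := hP
        have hex : ∃ b ∈ w, i ≤ b ∧ b ≤ j := by
          by_contra hcon
          exact n0 fun b hb hp => hcon ⟨b, hb, hp⟩
        refine Or.inr (Or.inr (Or.inr (Or.inr ⟨by rw [hcc, hc]; rfl, ?_, ?_, ?_, ?_⟩)))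
        · intro hC
          exact hC a (List.mem_cons_self) ⟨by omega, by omega⟩
        · rintro ⟨-, hall⟩
          obtain ⟨b, hbw, hb1, hb2⟩ := hex
          have hbi : b = i := hall b (List.mem_cons_of_mem _ hbw) hb1 hb2
          exact n1 ⟨hbi ▸ hbw, fun c hc hc1 hc2 => hall c (List.mem_cons_of_mem _ hc) hc1 hc2⟩
        · rintro ⟨-, hall⟩
          exact hne (hall i hmem le_rfl hij.le)
        · rintro ⟨-, hjw, hall, hnb⟩
          have hjw' : j ∈ w := by
            rcases List.mem_cons.mp hjw with h | h
            · exact absurd (h.trans hai).symm hne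
            · exact h
          by_cases hiw : i ∈ w
          · exact n3 ⟨hiw, hjw', fun c hc hc1 hc2 => hall c (List.mem_cons_of_mem _ hc) hc1 hc2,
              fun hb => hnb (bad_cons.mpr (Or.inr hb))⟩
          · refine n2 ⟨hjw', ?_⟩
            intro c hcw hc1 hc2
            rcases hall c (List.mem_cons_of_mem _ hcw) hc1 hc2 with hcase | hcase
            · exact absurd (hcase ▸ hcw) hiw
            · exact hcase
    · by_cases haj : a = j
      · have hmem : j ∈ a :: w := List.mem_cons.mpr (Or.inl haj.symm)
        have hcc : code i j (a :: w) = mul5 2 (code i j w) := by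
          rw [code_cons]; simp [lc, haj, Ne.symm hne]
        rcases IH with ⟨hc, hP⟩ | ⟨hc, hP⟩ | ⟨hc, hP⟩ | ⟨hc, hP⟩ | ⟨hc, hP⟩
        · -- code w = 0 : result J
          refine Or.inr (Or.inr (Or.inl ⟨by rw [hcc, hc]; rfl, hmem, ?_⟩))
          intro b hb h1 h2
          rcases List.mem_cons.mp hb with rfl | hb
          · exact haj
          · exact absurd ⟨h1, h2⟩ (hP b hb)
        · -- code w = 1 : result K
          obtain ⟨hiw, hall⟩ := hP
          refine Or.inr (Or.inr (Or.inr (Or.inr ⟨by rw [hcc, hc]; rfl, ?_, ?_, ?_, ?_⟩)))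
          · intro hC
            exact hC a (List.mem_cons_self) ⟨by omega, by omega⟩
          · rintro ⟨-, hall'⟩
            exact hai (hall' a (List.mem_cons_self) (by omega) (by omega))
          · rintro ⟨-, hall'⟩
            exact hne (hall' i (List.mem_cons_of_mem _ hiw) le_rfl hij.le)
          · rintro ⟨-, -, -, hnb⟩
            exact hnb (bad_cons.mpr (Or.inl ⟨haj, hiw⟩))
        · -- code w = 2 : result J
          refine Or.inr (Or.inr (Or.inl ⟨by rw [hcc, hc]; rfl, hmem, ?_⟩))
          intro b hb h1 h2
          rcases List.mem_cons.mp hb with rfl | hb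
          · exact haj
          · exact hP.2 b hb h1 h2
        · -- code w = 3 : result K
          obtain ⟨hiw, hjw, hall, hnb⟩ := hP
          refine Or.inr (Or.inr (Or.inr (Or.inr ⟨by rw [hcc, hc]; rfl, ?_, ?_, ?_, ?_⟩)))
          · intro hC
            exact hC a (List.mem_cons_self) ⟨by omega, by omega⟩
          · rintro ⟨-, hall'⟩
            exact hai (hall' a (List.mem_cons_self) (by omega) (by omega))
          · rintro ⟨-, hall'⟩
            exact hne (hall' i (List.mem_cons_of_mem _ hiw) le_rfl hij.le)
          · rintro ⟨-, -, -, hnb'⟩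
            exact hnb' (bad_cons.mpr (Or.inl ⟨haj, hiw⟩))
        · -- code w = 4 : result K
          obtain ⟨n0, n1, n2, n3⟩ := hP
          have hex : ∃ b ∈ w, i ≤ b ∧ b ≤ j := by
            by_contra hcon
            exact n0 fun b hb hp => hcon ⟨b, hb, hp⟩
          refine Or.inr (Or.inr (Or.inr (Or.inr ⟨by rw [hcc, hc]; rfl, ?_, ?_, ?_, ?_⟩)))
          · intro hC
            exact hC a (List.mem_cons_self) ⟨by omega, by omega⟩
          · rintro ⟨-, hall'⟩
            exact hai (hall' a (List.mem_cons_self) (by omega) (by omega))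
          · rintro ⟨-, hall'⟩
            obtain ⟨b, hbw, hb1, hb2⟩ := hex
            have hbj : b = j := hall' b (List.mem_cons_of_mem _ hbw) hb1 hb2
            exact n2 ⟨hbj ▸ hbw, fun c hc hc1 hc2 => hall' c (List.mem_cons_of_mem _ hc) hc1 hc2⟩
          · rintro ⟨hiw, -, -, hnb⟩
            have hiw' : i ∈ w := by
              rcases List.mem_cons.mp hiw with h | h
              · exact absurd (h.trans haj) hne
              · exact h
            exact hnb (bad_cons.mpr (Or.inl ⟨haj, hiw'⟩))
      · by_cases ham : i < a ∧ a < j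
        · -- middle letter : result K always
          have hlc : lc i j a = 4 := by simp [lc, hai, haj, ham]
          have hcc : code i j (a :: w) = 4 := by
            rw [code_cons, hlc, mul5_four]
          refine Or.inr (Or.inr (Or.inr (Or.inr ⟨hcc, ?_, ?_, ?_, ?_⟩)))
          · intro hC
            exact hC a (List.mem_cons_self) ⟨ham.1.le, ham.2.le⟩
          · rintro ⟨-, hall⟩
            exact hai (hall a (List.mem_cons_self) ham.1.le ham.2.le)
          · rintro ⟨-, hall⟩
            exact haj (hall a (List.mem_cons_self) ham.1.le ham.2.le)
          · rintro ⟨-, -, hall, -⟩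
            rcases hall a (List.mem_cons_self) ham.1.le ham.2.le with h | h
            · exact hai h
            · exact haj h
        · -- outside letter : identity
          have hrange : ¬(i ≤ a ∧ a ≤ j) := by
            rintro ⟨h1, h2⟩
            rcases h1.lt_or_eq with h | h
            · rcases h2.lt_or_eq with h' | h'
              · exact ham ⟨h, h'⟩
              · exact haj h'
            · exact hai h.symm
          have hcc : code i j (a :: w) = code i j w := by
            rw [code_cons]
            have hlc : lc i j a = 0 := by simp [lc, hai, haj, ham]
            rw [hlc, mul5_zero]
          have hmi : i ≠ a := fun h => hai h.symm
          have hmj : j ≠ a := fun h => haj h.symm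
          have e0 : C0 i j (a :: w) ↔ C0 i j w := by
            unfold C0
            constructor
            · intro hC b hb
              exact hC b (List.mem_cons_of_mem _ hb)
            · intro hC b hb
              rcases List.mem_cons.mp hb with rfl | hb
              · exact hrange
              · exact hC b hb
          have emem : ∀ x : ℕ, x ≠ a → (x ∈ a :: w ↔ x ∈ w) := by
            intro x hx
            simp [List.mem_cons, hx]
          have eall1 : (∀ b ∈ a :: w, i ≤ b → b ≤ j → b = i) ↔
              (∀ b ∈ w, i ≤ b → b ≤ j → b = i) := by
            constructor
            · intro hC b hb
              exact hC b (List.mem_cons_of_mem _ hb)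
            · intro hC b hb h1 h2
              rcases List.mem_cons.mp hb with rfl | hb
              · exact absurd ⟨h1, h2⟩ hrange
              · exact hC b hb h1 h2
          have eall2 : (∀ b ∈ a :: w, i ≤ b → b ≤ j → b = j) ↔
              (∀ b ∈ w, i ≤ b → b ≤ j → b = j) := by
            constructor
            · intro hC b hb
              exact hC b (List.mem_cons_of_mem _ hb)
            · intro hC b hb h1 h2
              rcases List.mem_cons.mp hb with rfl | hb
              · exact absurd ⟨h1, h2⟩ hrange
              · exact hC b hb h1 h2
          have eall3 : (∀ b ∈ a :: w, i ≤ b → b ≤ j → b = i ∨ b = j) ↔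
              (∀ b ∈ w, i ≤ b → b ≤ j → b = i ∨ b = j) := by
            constructor
            · intro hC b hb
              exact hC b (List.mem_cons_of_mem _ hb)
            · intro hC b hb h1 h2
              rcases List.mem_cons.mp hb with rfl | hb
              · exact absurd ⟨h1, h2⟩ hrange
              · exact hC b hb h1 h2
          have ebad : Bad i j (a :: w) ↔ Bad i j w := by
            rw [bad_cons]
            simp [haj]
          have e1 : C1 i j (a :: w) ↔ C1 i j w := by
            unfold C1
            rw [emem i hmi, eall1]
          have e2 : C2 i j (a :: w) ↔ C2 i j w := by
            unfold C2
            rw [emem j hmj, eall2]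
          have e3 : C3 i j (a :: w) ↔ C3 i j w := by
            unfold C3
            rw [emem i hmi, emem j hmj, eall3, ebad]
          rcases IH with ⟨hc, hP⟩ | ⟨hc, hP⟩ | ⟨hc, hP⟩ | ⟨hc, hP⟩ | ⟨hc, hP⟩
          · exact Or.inl ⟨hcc.trans hc, e0.mpr hP⟩
          · exact Or.inr (Or.inl ⟨hcc.trans hc, e1.mpr hP⟩)
          · exact Or.inr (Or.inr (Or.inl ⟨hcc.trans hc, e2.mpr hP⟩))
          · exact Or.inr (Or.inr (Or.inr (Or.inl ⟨hcc.trans hc, e3.mpr hP⟩)))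
          · exact Or.inr (Or.inr (Or.inr (Or.inr ⟨hcc.trans hc,
              fun h => hP.1 (e0.mp h), fun h => hP.2.1 (e1.mp h),
              fun h => hP.2.2.1 (e2.mp h), fun h => hP.2.2.2 (e3.mp h)⟩)))

def fmat {M : Type*} (E I J K L : M) (c : ℕ) : M :=
  if c = 0 then E else if c = 1 then I else if c = 2 then J else if c = 3 then L else K

set_option maxHeartbeats 1000000 in
lemma fmat_mul {S : Type*} [CommSemiring S] {E I J K L : Matrix (Fin 2) (Fin 2) S}
    (hE2 : E = !![1, 0; 0, 1]) (hI : I = !![1, 1; 0, 0]) (hJ : J = !![0, 0; 0, 1])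
    (hK2 : K = !![0, 0; 0, 0]) (hL2 : L = !![0, 1; 0, 0]) :
    ∀ x ≤ 4, ∀ y ≤ 4, fmat E I J K L (mul5 x y) =
      fmat E I J K L x * fmat E I J K L y := by
  subst hE2 hI hJ hK2 hL2
  intro x hx y hy
  interval_cases x <;> interval_cases y <;>
    norm_num [mul5, fmat, Matrix.mul_fin_two, funext_iff, Fin.forall_fin_two]

set_option maxHeartbeats 1000000 in
lemma fmat_inj {S : Type*} [CommSemiring S] [Nontrivial S]
    {E I J K L : Matrix (Fin 2) (Fin 2) S}
    (hE2 : E = !![1, 0; 0, 1]) (hI : I = !![1, 1; 0, 0]) (hJ : J = !![0, 0; 0, 1])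
    (hK2 : K = !![0, 0; 0, 0]) (hL2 : L = !![0, 1; 0, 0]) :
    ∀ x ≤ 4, ∀ y ≤ 4, fmat E I J K L x = fmat E I J K L y → x = y := by
  subst hE2 hI hJ hK2 hL2
  intro x hx y hy hxy
  interval_cases x <;> interval_cases y <;>
    first
      | rfl
      | (exfalso;
         norm_num [fmat, funext_iff, Fin.forall_fin_two, ← Matrix.ext_iff] at hxy)

end Stmt15Aux

open Stmt15Aux in
/-- The characterization of the values of the homomorphism
h_{ij} : ℕ* → UT₂(S), sending i ↦ I, j ↦ J, letters strictly between i and j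
to the zero matrix K, and all other letters to the identity E. -/
theorem stmt_15 (S : Type*) [CommSemiring S] (α : S)
    (hα : ∀ k l : ℕ, α ^ k = α ^ l → k = l)
    (i j : ℕ) (hij : i < j)
    (E I J K L : Matrix (Fin 2) (Fin 2) S)
    (hE : E = 1)
    (hI : I = !![1, 1; 0, 0])
    (hJ : J = !![0, 0; 0, 1])
    (hK : K = J * I)
    (hL : L = I * J)
    (h : List ℕ → Matrix (Fin 2) (Fin 2) S)
    (hh : ∀ w : List ℕ, h w =
      (w.map (fun a =>
        if a = i then I else if a = j then J
        else if i < a ∧ a < j then K else E)).prod) :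
    ∀ w : List ℕ,
      (h w = E ↔ ∀ a ∈ w, ¬(i ≤ a ∧ a ≤ j)) ∧
      (h w = I ↔ i ∈ w ∧ ∀ a ∈ w, i ≤ a → a ≤ j → a = i) ∧
      (h w = J ↔ j ∈ w ∧ ∀ a ∈ w, i ≤ a → a ≤ j → a = j) ∧
      (h w = L ↔ i ∈ w ∧ j ∈ w ∧
        (∀ a ∈ w, i ≤ a → a ≤ j → a = i ∨ a = j) ∧
        ¬∃ w₁ w₂ w₃ : List ℕ, w = w₁ ++ j :: w₂ ++ i :: w₃) ∧
      ((h w ≠ E ∧ h w ≠ I ∧ h w ≠ J ∧ h w ≠ L) → h w = K) := by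
  -- nontriviality
  have one0 : (1 : S) ≠ 0 := by
    intro h10
    have hα0 : α = 0 := by
      calc α = α * 1 := (mul_one α).symm
      _ = α * 0 := by rw [h10]
      _ = 0 := mul_zero α
    have : α ^ 0 = α ^ 1 := by rw [pow_zero, pow_one, hα0, h10]
    exact absurd (hα 0 1 this) (by omega)
  haveI : Nontrivial S := ⟨1, 0, one0⟩
  -- explicit matrix forms
  have hE2 : E = !![1, 0; 0, 1] := by rw [hE, Matrix.one_fin_two]
  have hK2 : K = !![0, 0; 0, 0] := by
    rw [hK, hJ, hI]
    norm_num [Matrix.mul_fin_two, funext_iff, Fin.forall_fin_two]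
  have hL2 : L = !![0, 1; 0, 0] := by
    rw [hL, hI, hJ]
    norm_num [Matrix.mul_fin_two, funext_iff, Fin.forall_fin_two]
  have hfm := fmat_mul hE2 hI hJ hK2 hL2
  have hinj := fmat_inj hE2 hI hJ hK2 hL2
  -- the letter matrices
  have hletter : ∀ a : ℕ, (if a = i then I else if a = j then J
      else if i < a ∧ a < j then K else E) = fmat E I J K L (lc i j a) := by
    intro a
    unfold lc
    split_ifs <;> simp [fmat]
  -- h computes fmat of the code
  have hwf : ∀ w : List ℕ, h w = fmat E I J K L (code i j w) := by
    intro w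
    induction w with
    | nil => rw [hh]; simp [code_nil, fmat, hE]
    | cons a w ih =>
      rw [hh, List.map_cons, List.prod_cons, ← hh w, ih, code_cons,
        hfm _ (lc_le i j a) _ (code_le i j w), hletter]
  intro w
  have hM := main i j hij w
  unfold C0 C1 C2 C3 Bad at hM
  have hcle := code_le i j w
  have hw := hwf w
  have key : ∀ k : ℕ, k ≤ 4 → (h w = fmat E I J K L k ↔ code i j w = k) := by
    intro k hk
    rw [hw]
    constructor
    · intro hx
      exact hinj _ hcle _ hk hx
    · intro hx
      rw [hx]
  have keyE : h w = E ↔ code i j w = 0 := by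
    have := key 0 (by norm_num)
    simpa [fmat] using this
  have keyI : h w = I ↔ code i j w = 1 := by
    have := key 1 (by norm_num)
    simpa [fmat] using this
  have keyJ : h w = J ↔ code i j w = 2 := by
    have := key 2 (by norm_num)
    simpa [fmat] using this
  have keyL : h w = L ↔ code i j w = 3 := by
    have := key 3 (by norm_num)
    simpa [fmat] using this
  refine ⟨?_, ?_, ?_, ?_, ?_⟩
  · rw [keyE]
    constructor
    · intro h0
      rcases hM with ⟨hc, hP⟩ | ⟨hc, hP⟩ | ⟨hc, hP⟩ | ⟨hc, hP⟩ | ⟨hc, hP⟩ <;>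
        first | exact hP | omega
    · intro hC
      rcases hM with ⟨hc, hP⟩ | ⟨hc, hP⟩ | ⟨hc, hP⟩ | ⟨hc, hP⟩ | ⟨hc, hP⟩
      · exact hc
      · exact absurd (⟨le_rfl, hij.le⟩ : i ≤ i ∧ i ≤ j) (hC i hP.1)
      · exact absurd (⟨hij.le, le_rfl⟩ : i ≤ j ∧ j ≤ j) (hC j hP.1)
      · exact absurd (⟨le_rfl, hij.le⟩ : i ≤ i ∧ i ≤ j) (hC i hP.1)
      · exact absurd hC hP.1
  · rw [keyI]
    constructor
    · intro h0
      rcases hM with ⟨hc, hP⟩ | ⟨hc, hP⟩ | ⟨hc, hP⟩ | ⟨hc, hP⟩ | ⟨hc, hP⟩ <;>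
        first | exact hP | omega
    · intro hC
      rcases hM with ⟨hc, hP⟩ | ⟨hc, hP⟩ | ⟨hc, hP⟩ | ⟨hc, hP⟩ | ⟨hc, hP⟩
      · exact absurd (⟨le_rfl, hij.le⟩ : i ≤ i ∧ i ≤ j) (hP i hC.1)
      · exact hc
      · exact absurd (hC.2 j hP.1 hij.le le_rfl).symm hij.ne
      · exact absurd (hC.2 j hP.2.1 hij.le le_rfl).symm hij.ne
      · exact absurd hC hP.2.1
  · rw [keyJ]
    constructor
    · intro h0
      rcases hM with ⟨hc, hP⟩ | ⟨hc, hP⟩ | ⟨hc, hP⟩ | ⟨hc, hP⟩ | ⟨hc, hP⟩ <;>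
        first | exact hP | omega
    · intro hC
      rcases hM with ⟨hc, hP⟩ | ⟨hc, hP⟩ | ⟨hc, hP⟩ | ⟨hc, hP⟩ | ⟨hc, hP⟩
      · exact absurd (⟨hij.le, le_rfl⟩ : i ≤ j ∧ j ≤ j) (hP j hC.1)
      · exact absurd (hC.2 i hP.1 le_rfl hij.le) hij.ne
      · exact hc
      · exact absurd (hC.2 i hP.1 le_rfl hij.le) hij.ne
      · exact absurd hC hP.2.2.1
  · rw [keyL]
    constructor
    · intro h0
      rcases hM with ⟨hc, hP⟩ | ⟨hc, hP⟩ | ⟨hc, hP⟩ | ⟨hc, hP⟩ | ⟨hc, hP⟩ <;>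
        first | exact hP | omega
    · intro hC
      rcases hM with ⟨hc, hP⟩ | ⟨hc, hP⟩ | ⟨hc, hP⟩ | ⟨hc, hP⟩ | ⟨hc, hP⟩
      · exact absurd (⟨le_rfl, hij.le⟩ : i ≤ i ∧ i ≤ j) (hP i hC.1)
      · exact absurd (hP.2 j hC.2.1 hij.le le_rfl).symm hij.ne
      · exact absurd (hP.2 i hC.1 le_rfl hij.le) hij.ne
      · exact hc
      · exact absurd hC hP.2.2.2
  · rintro ⟨nE, nI, nJ, nL⟩
    rcases hM with ⟨hc, -⟩ | ⟨hc, -⟩ | ⟨hc, -⟩ | ⟨hc, -⟩ | ⟨hc, -⟩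
    · exact absurd (keyE.mpr hc) nE
    · exact absurd (keyI.mpr hc) nI
    · exact absurd (keyJ.mpr hc) nJ
    · exact absurd (keyL.mpr hc) nL
    · rw [hw, hc]
      rfl
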